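/- arXiv:0903.4308 — 2 statements merged into one kernel-verified Lean document; each statement's English description precedes it below -/
import Mathlib

section
/- Let X = (J₁,...,J_k) be jointly distributed random variables together with a random variable Y (all finite-valued). Then I(J₁...J_k ; Y) ≥ ∑_{ℓ=1}^k I(J_ℓ ; Y) - ∑_{ℓ=1}^{k-1} I(J_ℓ ; J_{ℓ+1}...J_k), where I denotes Shannon mutual information. -/
open Finset

/-- Probability that a finite-valued random variable `X` (on a finite sample space with
pmf `μ`) takes the value `x`. -/
noncomputable def probOf {Ω α : Type*} [Fintype Ω] [DecidableEq α]
    (μ : Ω → ℝ) (X : Ω → α) (x : α) : ℝ :=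
  ∑ ω, if X ω = x then μ ω else 0

/-- Shannon entropy (base 2) of a finite-valued random variable. -/
noncomputable def ent {Ω α : Type*} [Fintype Ω] [Fintype α] [DecidableEq α]
    (μ : Ω → ℝ) (X : Ω → α) : ℝ :=
  -∑ x, probOf μ X x * Real.logb 2 (probOf μ X x)

/-- Shannon mutual information `I(X;Y) = H(X) + H(Y) - H(X,Y)` (base 2). -/
noncomputable def minfo {Ω α β : Type*} [Fintype Ω] [Fintype α] [Fintype β]
    [DecidableEq α] [DecidableEq β] (μ : Ω → ℝ) (X : Ω → α) (Y : Ω → β) : ℝ :=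
  ent μ X + ent μ Y - ent μ (fun ω => (X ω, Y ω))

namespace MInfoAux


variable {Ω : Type*} [Fintype Ω]

theorem probOf_nonneg {α : Type*} [DecidableEq α] (μ : Ω → ℝ) (hμ0 : ∀ ω, 0 ≤ μ ω)
    (X : Ω → α) (x : α) : 0 ≤ probOf μ X x :=
  Finset.sum_nonneg fun ω _ => by by_cases h : X ω = x <;> simp [h, hμ0 ω]

theorem sum_probOf {α : Type*} [Fintype α] [DecidableEq α] (μ : Ω → ℝ) (hμ1 : ∑ ω, μ ω = 1)
    (X : Ω → α) : ∑ x, probOf μ X x = 1 := by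
  unfold probOf
  rw [Finset.sum_comm]
  simpa using hμ1

theorem probOf_pair_le_snd {α β : Type*} [DecidableEq α] [DecidableEq β] (μ : Ω → ℝ)
    (hμ0 : ∀ ω, 0 ≤ μ ω) (X : Ω → α) (Z : Ω → β) (x : α) (z : β) :
    probOf μ (fun ω => (X ω, Z ω)) (x, z) ≤ probOf μ Z z := by
  refine Finset.sum_le_sum fun ω _ => ?_
  by_cases h : X ω = x <;> by_cases h' : Z ω = z <;> simp [h, h', hμ0 ω, Prod.ext_iff]

theorem sum_probOf_pair_fst {α β : Type*} [Fintype α] [DecidableEq α] [DecidableEq β]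
    (μ : Ω → ℝ) (X : Ω → α) (Z : Ω → β) (z : β) :
    ∑ x, probOf μ (fun ω => (X ω, Z ω)) (x, z) = probOf μ Z z := by
  unfold probOf
  rw [Finset.sum_comm]
  refine Finset.sum_congr rfl fun ω _ => ?_
  by_cases h : Z ω = z <;> simp [Prod.ext_iff, h, ite_and]

theorem marg_AC {α β γ : Type*} [Fintype β] [DecidableEq α] [DecidableEq β] [DecidableEq γ]
    (μ : Ω → ℝ) (A : Ω → α) (B : Ω → β) (C : Ω → γ) (a : α) (c : γ) :
    ∑ b, probOf μ (fun ω => ((A ω, B ω), C ω)) ((a, b), c)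
      = probOf μ (fun ω => (A ω, C ω)) (a, c) := by
  unfold probOf
  rw [Finset.sum_comm]
  refine Finset.sum_congr rfl fun ω _ => ?_
  by_cases hA : A ω = a <;> by_cases hC : C ω = c <;> simp [hA, hC, Prod.ext_iff, ite_and]

theorem marg_BC {α β γ : Type*} [Fintype α] [DecidableEq α] [DecidableEq β] [DecidableEq γ]
    (μ : Ω → ℝ) (A : Ω → α) (B : Ω → β) (C : Ω → γ) (b : β) (c : γ) :
    ∑ a, probOf μ (fun ω => ((A ω, B ω), C ω)) ((a, b), c)
      = probOf μ (fun ω => (B ω, C ω)) (b, c) := by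
  unfold probOf
  rw [Finset.sum_comm]
  refine Finset.sum_congr rfl fun ω _ => ?_
  by_cases hB : B ω = b <;> by_cases hC : C ω = c <;> simp [hB, hC, Prod.ext_iff, ite_and]

theorem ent_eq {α : Type*} [Fintype α] [DecidableEq α] (μ : Ω → ℝ) (X : Ω → α) :
    ent μ X = (-∑ x, probOf μ X x * Real.log (probOf μ X x)) / Real.log 2 := by
  unfold ent Real.logb
  rw [neg_div, Finset.sum_div]
  congr 1
  exact Finset.sum_congr rfl fun x _ => (mul_div_assoc _ _ _).symm

theorem ent_strong_subadd {α β γ : Type*} [Fintype α] [Fintype β] [Fintype γ]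
    [DecidableEq α] [DecidableEq β] [DecidableEq γ]
    (μ : Ω → ℝ) (hμ0 : ∀ ω, 0 ≤ μ ω) (hμ1 : ∑ ω, μ ω = 1)
    (A : Ω → α) (B : Ω → β) (C : Ω → γ) :
    ent μ (fun ω => ((A ω, B ω), C ω)) + ent μ C
      ≤ ent μ (fun ω => (A ω, C ω)) + ent μ (fun ω => (B ω, C ω)) := by
  rw [ent_eq, ent_eq, ent_eq, ent_eq, ← add_div, ← add_div,
    div_le_div_iff_of_pos_right (Real.log_pos one_lt_two)]
  set p := probOf μ (fun ω => ((A ω, B ω), C ω)) with hp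
  set pAC := probOf μ (fun ω => (A ω, C ω)) with hpAC
  set pBC := probOf μ (fun ω => (B ω, C ω)) with hpBC
  set pC := probOf μ C with hpC
  have hACeq : ∀ a c, (∑ b, p ((a, b), c)) = pAC (a, c) := fun a c => marg_AC μ A B C a c
  have hBCeq : ∀ b c, (∑ a, p ((a, b), c)) = pBC (b, c) := fun b c => marg_BC μ A B C b c
  have hCeq : ∀ c, (∑ ab : α × β, p (ab, c)) = pC c := fun c =>
    sum_probOf_pair_fst μ (fun ω => (A ω, B ω)) C c
  have hACsum : ∀ c, (∑ a, pAC (a, c)) = pC c := fun c => sum_probOf_pair_fst μ A C c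
  have hBCsum : ∀ c, (∑ b, pBC (b, c)) = pC c := fun c => sum_probOf_pair_fst μ B C c
  have hC : (∑ c, pC c * Real.log (pC c))
      = ∑ x : (α × β) × γ, p x * Real.log (pC x.2) := by
    calc (∑ c, pC c * Real.log (pC c))
        = ∑ c, ∑ ab : α × β, p (ab, c) * Real.log (pC c) := by
          refine Finset.sum_congr rfl fun c _ => ?_
          rw [← Finset.sum_mul, hCeq c]
      _ = ∑ ab : α × β, ∑ c, p (ab, c) * Real.log (pC c) := Finset.sum_comm
      _ = ∑ x : (α × β) × γ, p x * Real.log (pC x.2) :=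
          (Fintype.sum_prod_type (fun x : (α × β) × γ => p x * Real.log (pC x.2))).symm
  have hAC : (∑ z : α × γ, pAC z * Real.log (pAC z))
      = ∑ x : (α × β) × γ, p x * Real.log (pAC (x.1.1, x.2)) := by
    calc (∑ z : α × γ, pAC z * Real.log (pAC z))
        = ∑ a, ∑ c, pAC (a, c) * Real.log (pAC (a, c)) :=
          Fintype.sum_prod_type (fun z : α × γ => pAC z * Real.log (pAC z))
      _ = ∑ a, ∑ c, ∑ b, p ((a, b), c) * Real.log (pAC (a, c)) := by
          refine Finset.sum_congr rfl fun a _ => Finset.sum_congr rfl fun c _ => ?_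
          rw [← Finset.sum_mul, hACeq a c]
      _ = ∑ a, ∑ b, ∑ c, p ((a, b), c) * Real.log (pAC (a, c)) := by
          exact Finset.sum_congr rfl fun a _ => Finset.sum_comm
      _ = ∑ ab : α × β, ∑ c, p (ab, c) * Real.log (pAC (ab.1, c)) :=
          (Fintype.sum_prod_type (fun ab : α × β => ∑ c, p (ab, c) * Real.log (pAC (ab.1, c)))).symm
      _ = ∑ x : (α × β) × γ, p x * Real.log (pAC (x.1.1, x.2)) :=
          (Fintype.sum_prod_type (fun x : (α × β) × γ => p x * Real.log (pAC (x.1.1, x.2)))).symm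
  have hBC : (∑ z : β × γ, pBC z * Real.log (pBC z))
      = ∑ x : (α × β) × γ, p x * Real.log (pBC (x.1.2, x.2)) := by
    calc (∑ z : β × γ, pBC z * Real.log (pBC z))
        = ∑ b, ∑ c, pBC (b, c) * Real.log (pBC (b, c)) :=
          Fintype.sum_prod_type (fun z : β × γ => pBC z * Real.log (pBC z))
      _ = ∑ b, ∑ c, ∑ a, p ((a, b), c) * Real.log (pBC (b, c)) := by
          refine Finset.sum_congr rfl fun b _ => Finset.sum_congr rfl fun c _ => ?_
          rw [← Finset.sum_mul, hBCeq b c]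
      _ = ∑ b, ∑ a, ∑ c, p ((a, b), c) * Real.log (pBC (b, c)) := by
          exact Finset.sum_congr rfl fun b _ => Finset.sum_comm
      _ = ∑ a, ∑ b, ∑ c, p ((a, b), c) * Real.log (pBC (b, c)) := Finset.sum_comm
      _ = ∑ ab : α × β, ∑ c, p (ab, c) * Real.log (pBC (ab.2, c)) :=
          (Fintype.sum_prod_type (fun ab : α × β => ∑ c, p (ab, c) * Real.log (pBC (ab.2, c)))).symm
      _ = ∑ x : (α × β) × γ, p x * Real.log (pBC (x.1.2, x.2)) :=
          (Fintype.sum_prod_type (fun x : (α × β) × γ => p x * Real.log (pBC (x.1.2, x.2)))).symm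
  have hPACle : ∀ (a : α) (b : β) (c : γ), p ((a, b), c) ≤ pAC (a, c) := by
    intro a b c
    refine Finset.sum_le_sum fun ω _ => ?_
    by_cases hA : A ω = a <;> by_cases hB : B ω = b <;> by_cases hCc : C ω = c <;>
      simp [hA, hB, hCc, hμ0 ω, Prod.ext_iff]
  have hPBCle : ∀ (a : α) (b : β) (c : γ), p ((a, b), c) ≤ pBC (b, c) := by
    intro a b c
    refine Finset.sum_le_sum fun ω _ => ?_
    by_cases hA : A ω = a <;> by_cases hB : B ω = b <;> by_cases hCc : C ω = c <;>
      simp [hA, hB, hCc, hμ0 ω, Prod.ext_iff]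
  have hpt : ∀ x : (α × β) × γ,
      p x - pAC (x.1.1, x.2) * pBC (x.1.2, x.2) / pC x.2
        ≤ p x * Real.log (p x) + p x * Real.log (pC x.2)
          - p x * Real.log (pAC (x.1.1, x.2)) - p x * Real.log (pBC (x.1.2, x.2)) := by
    rintro ⟨⟨a, b⟩, c⟩
    have h0p : (0:ℝ) ≤ p ((a, b), c) := probOf_nonneg μ hμ0 _ _
    have h0AC : (0:ℝ) ≤ pAC (a, c) := probOf_nonneg μ hμ0 _ _
    have h0BC : (0:ℝ) ≤ pBC (b, c) := probOf_nonneg μ hμ0 _ _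
    have h0C : (0:ℝ) ≤ pC c := probOf_nonneg μ hμ0 _ _
    rcases eq_or_lt_of_le h0p with hP | hP
    · have hr : (0:ℝ) ≤ pAC (a, c) * pBC (b, c) / pC c := by positivity
      rw [← hP]
      simpa using hr
    · have hPAC : p ((a, b), c) ≤ pAC (a, c) := hPACle a b c
      have hPBC : p ((a, b), c) ≤ pBC (b, c) := hPBCle a b c
      have hACC : pAC (a, c) ≤ pC c := probOf_pair_le_snd μ hμ0 A C a c
      have hQA : (0:ℝ) < pAC (a, c) := lt_of_lt_of_le hP hPAC
      have hQB : (0:ℝ) < pBC (b, c) := lt_of_lt_of_le hP hPBC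
      have hQC : (0:ℝ) < pC c := lt_of_lt_of_le hQA hACC
      set P := p ((a, b), c)
      set QA := pAC (a, c)
      set QB := pBC (b, c)
      set QC := pC c
      have hr : 0 < QA * QB / QC := by positivity
      have hlog : Real.log (QA * QB / QC) = Real.log QA + Real.log QB - Real.log QC := by
        rw [Real.log_div (by positivity) (ne_of_gt hQC),
          Real.log_mul (ne_of_gt hQA) (ne_of_gt hQB)]
      have h2 : Real.log (QA * QB / QC) - Real.log P ≤ QA * QB / QC / P - 1 := by
        have := Real.log_le_sub_one_of_pos (show 0 < QA * QB / QC / P by positivity)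
        rwa [Real.log_div (ne_of_gt hr) (ne_of_gt hP)] at this
      have h3 : P * (Real.log (QA * QB / QC) - Real.log P) ≤ P * (QA * QB / QC / P - 1) :=
        mul_le_mul_of_nonneg_left h2 (le_of_lt hP)
      have h4 : P * (QA * QB / QC / P - 1) = QA * QB / QC - P := by
        field_simp
      rw [hlog, h4] at h3
      nlinarith [h3]
  have sum_r : ∑ x : (α × β) × γ, pAC (x.1.1, x.2) * pBC (x.1.2, x.2) / pC x.2 ≤ 1 := by
    have key : ∀ c, (∑ ab : α × β, pAC (ab.1, c) * pBC (ab.2, c) / pC c) ≤ pC c := by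
      intro c
      have heq : (∑ ab : α × β, pAC (ab.1, c) * pBC (ab.2, c) / pC c)
          = pC c * pC c / pC c := by
        calc (∑ ab : α × β, pAC (ab.1, c) * pBC (ab.2, c) / pC c)
            = ∑ a, ∑ b, pAC (a, c) * pBC (b, c) / pC c :=
              Fintype.sum_prod_type (fun ab : α × β => pAC (ab.1, c) * pBC (ab.2, c) / pC c)
          _ = ∑ a, (pAC (a, c) * ∑ b, pBC (b, c)) / pC c := by
              refine Finset.sum_congr rfl fun a _ => ?_
              rw [Finset.mul_sum, Finset.sum_div]
          _ = (∑ a, pAC (a, c)) * (∑ b, pBC (b, c)) / pC c := by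
              rw [← Finset.sum_div, ← Finset.sum_mul]
          _ = pC c * pC c / pC c := by rw [hACsum c, hBCsum c]
      rw [heq]
      by_cases hc : pC c = 0
      · rw [hc]; simp
      · rw [mul_div_assoc, div_self hc, mul_one]
    calc (∑ x : (α × β) × γ, pAC (x.1.1, x.2) * pBC (x.1.2, x.2) / pC x.2)
        = ∑ ab : α × β, ∑ c, pAC (ab.1, c) * pBC (ab.2, c) / pC c :=
          Fintype.sum_prod_type (fun x : (α × β) × γ => pAC (x.1.1, x.2) * pBC (x.1.2, x.2) / pC x.2)
      _ = ∑ c, ∑ ab : α × β, pAC (ab.1, c) * pBC (ab.2, c) / pC c := Finset.sum_comm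
      _ ≤ ∑ c, pC c := Finset.sum_le_sum fun c _ => key c
      _ = 1 := sum_probOf μ hμ1 C
  have sum_p : ∑ x : (α × β) × γ, p x = 1 := sum_probOf μ hμ1 _
  have main : (0:ℝ) ≤ ∑ x : (α × β) × γ,
      (p x * Real.log (p x) + p x * Real.log (pC x.2)
        - p x * Real.log (pAC (x.1.1, x.2)) - p x * Real.log (pBC (x.1.2, x.2))) := by
    have h := Finset.sum_le_sum fun x (_ : x ∈ (univ : Finset ((α × β) × γ))) => hpt x
    rw [Finset.sum_sub_distrib, sum_p] at h
    linarith [sum_r]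
  rw [Finset.sum_sub_distrib, Finset.sum_sub_distrib, Finset.sum_add_distrib] at main
  linarith [main, hC, hAC, hBC]

theorem probOf_comp {α γ : Type*} [DecidableEq α] [DecidableEq γ] (μ : Ω → ℝ)
    (X : Ω → α) (e : α → γ) (he : Function.Injective e) (x : α) :
    probOf μ (fun ω => e (X ω)) (e x) = probOf μ X x := by
  unfold probOf
  exact Finset.sum_congr rfl fun ω _ => by simp [he.eq_iff]

theorem ent_comp {α γ : Type*} [Fintype α] [Fintype γ] [DecidableEq α] [DecidableEq γ]
    (μ : Ω → ℝ) (X : Ω → α) (e : α → γ) (he : Function.Injective e) :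
    ent μ (fun ω => e (X ω)) = ent μ X := by
  unfold ent
  congr 1
  rw [← Finset.sum_subset (Finset.subset_univ ((Finset.univ : Finset α).image e))
    (fun y _ hy => ?_)]
  · rw [Finset.sum_image (fun x _ y _ h => he h)]
    exact Finset.sum_congr rfl fun x _ => by rw [probOf_comp μ X e he]
  · have h0 : probOf μ (fun ω => e (X ω)) y = 0 := by
      refine Finset.sum_eq_zero fun ω _ => ?_
      rw [if_neg]
      exact fun h => hy (Finset.mem_image.mpr ⟨X ω, Finset.mem_univ _, h⟩)
    rw [h0, zero_mul]

theorem ent_of_subsingleton {α : Type*} [Fintype α] [DecidableEq α] [Subsingleton α]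
    (μ : Ω → ℝ) (hμ1 : ∑ ω, μ ω = 1) (X : Ω → α) : ent μ X = 0 := by
  unfold ent
  rw [neg_eq_zero]
  refine Finset.sum_eq_zero fun x _ => ?_
  have hp : probOf μ X x = 1 := by
    unfold probOf
    rw [Finset.sum_congr rfl fun ω _ => if_pos (Subsingleton.elim _ _)]
    exact hμ1
  rw [hp]
  simp


variable {Ω : Type*} [Fintype Ω]

theorem minfo_comp_fst {α β γ : Type*} [Fintype α] [Fintype β] [Fintype γ]
    [DecidableEq α] [DecidableEq β] [DecidableEq γ]
    (μ : Ω → ℝ) (X : Ω → α) (Y : Ω → β) (e : α → γ) (he : Function.Injective e) :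
    minfo μ (fun ω => e (X ω)) Y = minfo μ X Y := by
  unfold minfo
  rw [ent_comp μ X e he]
  congr 1
  exact ent_comp μ (fun ω => (X ω, Y ω)) (Prod.map e id) (he.prodMap Function.injective_id)

theorem minfo_comp_snd {α β γ : Type*} [Fintype α] [Fintype β] [Fintype γ]
    [DecidableEq α] [DecidableEq β] [DecidableEq γ]
    (μ : Ω → ℝ) (X : Ω → α) (Z : Ω → β) (e : β → γ) (he : Function.Injective e) :
    minfo μ X (fun ω => e (Z ω)) = minfo μ X Z := by
  unfold minfo
  rw [ent_comp μ Z e he]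
  congr 1
  exact ent_comp μ (fun ω => (X ω, Z ω)) (Prod.map id e) (Function.injective_id.prodMap he)

/-- Reindex the second argument along a surjection of index types. -/
theorem minfo_comp_index {α β ι ι' : Type*} [Fintype α] [Fintype β] [Fintype ι] [Fintype ι']
    [DecidableEq α] [DecidableEq β] [DecidableEq ι] [DecidableEq ι']
    (μ : Ω → ℝ) (X : Ω → α) (B : Ω → ι → β) (σ : ι' → ι) (hσ : Function.Surjective σ) :
    minfo μ X (fun ω => fun j => B ω (σ j)) = minfo μ X B := by
  refine minfo_comp_snd μ X B (fun g j => g (σ j)) (fun g g' h => funext fun i => ?_)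
  obtain ⟨j, rfl⟩ := hσ i
  exact congrFun h j

theorem minfo_nonneg {α β : Type*} [Fintype α] [Fintype β] [DecidableEq α] [DecidableEq β]
    (μ : Ω → ℝ) (hμ0 : ∀ ω, 0 ≤ μ ω) (hμ1 : ∑ ω, μ ω = 1) (X : Ω → α) (Y : Ω → β) :
    0 ≤ minfo μ X Y := by
  have h := ent_strong_subadd μ hμ0 hμ1 X Y (fun _ => (0 : Fin 1))
  have e1 : ent μ (fun ω => ((X ω, Y ω), (0 : Fin 1))) = ent μ (fun ω => (X ω, Y ω)) :=
    ent_comp μ (fun ω => (X ω, Y ω)) (fun z => (z, (0 : Fin 1)))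
      (fun a b h => congrArg Prod.fst h)
  have e2 : ent μ (fun ω => (X ω, (0 : Fin 1))) = ent μ X :=
    ent_comp μ X (fun z => (z, (0 : Fin 1))) (fun a b h => congrArg Prod.fst h)
  have e3 : ent μ (fun ω => (Y ω, (0 : Fin 1))) = ent μ Y :=
    ent_comp μ Y (fun z => (z, (0 : Fin 1))) (fun a b h => congrArg Prod.fst h)
  have e4 : ent μ (fun _ : Ω => (0 : Fin 1)) = 0 := ent_of_subsingleton μ hμ1 _
  unfold minfo
  rw [e1, e4] at h
  linarith [h, e2, e3]

theorem minfo_pair_ge {α β γ : Type*} [Fintype α] [Fintype β] [Fintype γ]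
    [DecidableEq α] [DecidableEq β] [DecidableEq γ]
    (μ : Ω → ℝ) (hμ0 : ∀ ω, 0 ≤ μ ω) (hμ1 : ∑ ω, μ ω = 1)
    (A : Ω → α) (B : Ω → β) (Y : Ω → γ) :
    minfo μ A Y + minfo μ B Y - minfo μ A B ≤ minfo μ (fun ω => (A ω, B ω)) Y := by
  have h := ent_strong_subadd μ hμ0 hμ1 A B Y
  unfold minfo
  linarith [h]

theorem minfo_subsingleton_snd {α β : Type*} [Fintype α] [Fintype β] [DecidableEq α]
    [DecidableEq β] [Subsingleton β]
    (μ : Ω → ℝ) (hμ1 : ∑ ω, μ ω = 1) (X : Ω → α) (B : Ω → β) (hb : β) :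
    minfo μ X B = 0 := by
  unfold minfo
  have h1 : ent μ B = 0 := ent_of_subsingleton μ hμ1 B
  have h2 : ent μ (fun ω => (X ω, B ω)) = ent μ X := by
    have hBB : (fun ω => (X ω, B ω)) = fun ω => (X ω, hb) :=
      funext fun ω => by rw [Subsingleton.elim (B ω) hb]
    rw [hBB]
    exact ent_comp μ X (fun x => (x, hb)) (fun a b h => congrArg Prod.fst h)
  rw [h1, h2]
  ring

end MInfoAux

open MInfoAux

/-- Superadditivity of mutual information up to pairwise correlations of `J_ℓ` with the
tails: `I(J₁…J_k ; Y) ≥ ∑_ℓ I(J_ℓ;Y) - ∑_{ℓ<k} I(J_ℓ; J_{ℓ+1}…J_k)`. -/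
theorem minfo_superadditivity
    {Ω α β : Type*} [Fintype Ω] [Fintype α] [Fintype β] [DecidableEq α] [DecidableEq β]
    (μ : Ω → ℝ) (hμ0 : ∀ ω, 0 ≤ μ ω) (hμ1 : ∑ ω, μ ω = 1)
    (k : ℕ) (J : Fin k → Ω → α) (Y : Ω → β) :
    minfo μ (fun ω => fun i : Fin k => J i ω) Y
      ≥ (∑ ℓ : Fin k, minfo μ (J ℓ) Y)
        - ∑ ℓ ∈ Finset.univ.filter (fun ℓ : Fin k => (ℓ : ℕ) + 1 < k),
            minfo μ (J ℓ) (fun ω => fun i : {i : Fin k // ℓ < i} => J i ω) := by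
  induction k with
  | zero => simpa using minfo_nonneg μ hμ0 hμ1 (fun ω => fun i : Fin 0 => J i ω) Y
  | succ k ih =>
    haveI : Subsingleton (Fin 0 → α) := ⟨fun f g => funext fun i => i.elim0⟩
    -- the tuple is equivalent to the pair (head, tail)
    have h1 : minfo μ (fun ω => fun i : Fin (k+1) => J i ω) Y
        = minfo μ (fun ω => (J 0 ω, fun i : Fin k => J i.succ ω)) Y := by
      refine (minfo_comp_fst μ (fun ω => fun i : Fin (k+1) => J i ω) Y
        (fun f => (f 0, fun i : Fin k => f i.succ)) ?_).symm
      intro f g h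
      funext i
      refine Fin.cases ?_ (fun j => ?_) i
      · exact congrArg Prod.fst h
      · exact congrFun (congrArg Prod.snd h) j
    have h2 := minfo_pair_ge μ hμ0 hμ1 (J 0) (fun ω => fun i : Fin k => J i.succ ω) Y
    have h3 := ih (fun i => J i.succ)
    rw [Finset.sum_filter] at h3
    -- the tail at position 0
    have h4 : minfo μ (J 0) (fun ω => fun i : Fin k => J i.succ ω)
        = minfo μ (J 0) (fun ω => fun i : {i : Fin (k+1) // 0 < i} => J i.1 ω) := by
      have hσ : Function.Surjective
          (fun i : {i : Fin (k+1) // 0 < i} => i.1.pred (Fin.pos_iff_ne_zero.mp i.2)) := by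
        intro m
        exact ⟨⟨m.succ, Fin.succ_pos m⟩, Fin.pred_succ m⟩
      rw [← minfo_comp_index μ (J 0) (fun ω => fun i : Fin k => J i.succ ω)
        (fun i : {i : Fin (k+1) // 0 < i} => i.1.pred (Fin.pos_iff_ne_zero.mp i.2)) hσ]
      congr 1
      funext ω i
      show J ((i.1.pred _).succ) ω = J i.1 ω
      rw [Fin.succ_pred]
    -- the tails at later positions
    have h5 : ∀ i : Fin k,
        minfo μ (J i.succ) (fun ω => fun j : {j : Fin k // i < j} => J j.1.succ ω)
          = minfo μ (J i.succ) (fun ω => fun j : {j : Fin (k+1) // i.succ < j} => J j.1 ω) := by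
      intro i
      have hne : ∀ j : {j : Fin (k+1) // i.succ < j}, (0 : Fin (k+1)) < j.1 :=
        fun j => lt_trans (Fin.succ_pos i) j.2
      have hσ : Function.Surjective
          (fun j : {j : Fin (k+1) // i.succ < j} =>
            (⟨j.1.pred (Fin.pos_iff_ne_zero.mp (hne j)), by
              have h := j.2
              rw [← Fin.succ_pred j.1 (Fin.pos_iff_ne_zero.mp (hne j))] at h
              exact Fin.succ_lt_succ_iff.mp h⟩ : {j : Fin k // i < j})) := by
        intro m
        exact ⟨⟨m.1.succ, Fin.succ_lt_succ_iff.mpr m.2⟩, Subtype.ext (Fin.pred_succ (h := Fin.succ_ne_zero m.1) m.1)⟩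
      rw [← minfo_comp_index μ (J i.succ)
        (fun ω => fun j : {j : Fin k // i < j} => J j.1.succ ω) _ hσ]
      congr 1
      funext ω j
      show J ((j.1.pred (Fin.pos_iff_ne_zero.mp (hne j))).succ) ω = J j.1 ω
      rw [Fin.succ_pred]
    rw [Fin.sum_univ_succ (f := fun ℓ : Fin (k+1) => minfo μ (J ℓ) Y), Finset.sum_filter,
      Fin.sum_univ_succ (f := fun ℓ : Fin (k+1) => if (ℓ : ℕ) + 1 < k + 1 then
        minfo μ (J ℓ) (fun ω => fun i : {i : Fin (k+1) // ℓ < i} => J i.1 ω) else 0)]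
    have hmatch : ∀ i : Fin k,
        (if ((i.succ : Fin (k+1)) : ℕ) + 1 < k + 1 then
          minfo μ (J i.succ) (fun ω => fun j : {j : Fin (k+1) // i.succ < j} => J j.1 ω) else 0)
        = (if (i : ℕ) + 1 < k then
          minfo μ (J i.succ) (fun ω => fun j : {j : Fin k // i < j} => J j.1.succ ω) else 0) := by
      intro i
      have hcond : ((i.succ : Fin (k+1)) : ℕ) + 1 < k + 1 ↔ (i : ℕ) + 1 < k := by
        rw [Fin.val_succ]
        omega
      by_cases h : (i : ℕ) + 1 < k
      · rw [if_pos (hcond.mpr h), if_pos h, ← h5 i]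
      · rw [if_neg (fun hh => h (hcond.mp hh)), if_neg h]
    have hsums : (∑ i : Fin k, if ((i.succ : Fin (k+1)) : ℕ) + 1 < k + 1 then
          minfo μ (J i.succ) (fun ω => fun j : {j : Fin (k+1) // i.succ < j} => J j.1 ω) else 0)
        = ∑ i : Fin k, if (i : ℕ) + 1 < k then
          minfo μ (J i.succ) (fun ω => fun j : {j : Fin k // i < j} => J j.1.succ ω) else 0 :=
      Finset.sum_congr rfl fun i _ => hmatch i
    have hT0 : minfo μ (J 0) (fun ω => fun i : Fin k => J i.succ ω)
        ≤ (if ((0 : Fin (k+1)) : ℕ) + 1 < k + 1 then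
            minfo μ (J 0) (fun ω => fun i : {i : Fin (k+1) // 0 < i} => J i.1 ω) else 0) := by
      by_cases hk : 0 < k
      · rw [if_pos (by simpa using hk), ← h4]
      · have hk0 : k = 0 := by omega
        subst hk0
        rw [if_neg (by simp)]
        exact le_of_eq (minfo_subsingleton_snd μ hμ1 (J 0)
          (fun ω => fun i : Fin 0 => J i.succ ω) (fun i => i.elim0))
    rw [h1, hsums]
    linarith [h2, h3, hT0]
end

section
/- Let J₁,...,J_k, Y be finite-valued random variables such that the marginal distributions of the pairs (J_ℓ, Y) are all equal to that of (J₁, Y), and such that I(J_ℓ; J_{ℓ+1}...J_k) ≤ ε_ℓ for each ℓ < k. Then I(J₁; Y) ≤ (1/k) I(J₁...J_k; Y) + (1/k) ∑_{ℓ=1}^{k-1} ε_ℓ. -/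
open Finset

set_option linter.unusedSectionVars false
set_option maxHeartbeats 800000

section Aux

variable {Ω α β γ : Type*} [Fintype Ω] [Fintype α] [Fintype β] [Fintype γ]
  [DecidableEq α] [DecidableEq β] [DecidableEq γ]

lemma probOf_nonneg (μ : Ω → ℝ) (hμ0 : ∀ ω, 0 ≤ μ ω) (X : Ω → α) (x : α) :
    0 ≤ probOf μ X x :=
  Finset.sum_nonneg fun ω _ => by by_cases h : X ω = x <;> simp [h, hμ0 ω]

lemma probOf_fst (μ : Ω → ℝ) (X : Ω → α) (Y : Ω → β) (a : α) :
    probOf μ X a = ∑ b, probOf μ (fun ω => (X ω, Y ω)) (a, b) := by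
  unfold probOf
  rw [Finset.sum_comm]
  refine Finset.sum_congr rfl fun ω _ => ?_
  by_cases h : X ω = a <;> simp [h, Prod.ext_iff]

lemma probOf_snd (μ : Ω → ℝ) (X : Ω → α) (Y : Ω → β) (b : β) :
    probOf μ Y b = ∑ a, probOf μ (fun ω => (X ω, Y ω)) (a, b) := by
  unfold probOf
  rw [Finset.sum_comm]
  refine Finset.sum_congr rfl fun ω _ => ?_
  by_cases h : Y ω = b <;> simp [h, Prod.ext_iff]

lemma marg3_12 (μ : Ω → ℝ) (X : Ω → α) (Y : Ω → β) (Z : Ω → γ) (a : α) (b : β) :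
    probOf μ (fun ω => (X ω, Y ω)) (a, b)
      = ∑ c, probOf μ (fun ω => (X ω, Y ω, Z ω)) (a, b, c) := by
  unfold probOf
  rw [Finset.sum_comm]
  refine Finset.sum_congr rfl fun ω _ => ?_
  by_cases h1 : X ω = a <;> by_cases h2 : Y ω = b <;> simp [h1, h2, Prod.ext_iff]

lemma marg3_23 (μ : Ω → ℝ) (X : Ω → α) (Y : Ω → β) (Z : Ω → γ) (b : β) (c : γ) :
    probOf μ (fun ω => (Y ω, Z ω)) (b, c)
      = ∑ a, probOf μ (fun ω => (X ω, Y ω, Z ω)) (a, b, c) := by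
  unfold probOf
  rw [Finset.sum_comm]
  refine Finset.sum_congr rfl fun ω _ => ?_
  by_cases h1 : Y ω = b <;> by_cases h2 : Z ω = c <;> simp [h1, h2, Prod.ext_iff]

lemma marg3_2 (μ : Ω → ℝ) (X : Ω → α) (Y : Ω → β) (Z : Ω → γ) (b : β) :
    probOf μ Y b = ∑ a, ∑ c, probOf μ (fun ω => (X ω, Y ω, Z ω)) (a, b, c) := by
  rw [probOf_snd μ X Y b]
  exact Finset.sum_congr rfl fun a _ => marg3_12 μ X Y Z a b

lemma ent_comp_inj (μ : Ω → ℝ) (X : Ω → α) (f : α → β) (hf : Function.Injective f) :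
    ent μ (fun ω => f (X ω)) = ent μ X := by
  unfold ent
  congr 1
  have h1 : ∀ x, probOf μ (fun ω => f (X ω)) (f x) = probOf μ X x := fun x =>
    Finset.sum_congr rfl fun ω _ => by simp [hf.eq_iff]
  have h2 : ∀ y, y ∉ Finset.univ.image f → probOf μ (fun ω => f (X ω)) y = 0 := by
    intro y hy
    refine Finset.sum_eq_zero fun ω _ => ?_
    rw [if_neg]
    intro h
    exact hy (Finset.mem_image.mpr ⟨X ω, Finset.mem_univ _, h⟩)
  calc ∑ y, probOf μ (fun ω => f (X ω)) y * Real.logb 2 (probOf μ (fun ω => f (X ω)) y)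
      = ∑ y ∈ Finset.univ.image f,
          probOf μ (fun ω => f (X ω)) y * Real.logb 2 (probOf μ (fun ω => f (X ω)) y) := by
        refine (Finset.sum_subset (Finset.subset_univ _) fun y _ hy => ?_).symm
        simp [h2 y hy]
    _ = ∑ x, probOf μ (fun ω => f (X ω)) (f x) * Real.logb 2 (probOf μ (fun ω => f (X ω)) (f x)) :=
        Finset.sum_image (fun a _ b _ h => hf h)
    _ = ∑ x, probOf μ X x * Real.logb 2 (probOf μ X x) := by
        refine Finset.sum_congr rfl fun x _ => ?_
        rw [h1 x]

lemma minfo_comp_inj (μ : Ω → ℝ) (X : Ω → α) (Y : Ω → β) (f : α → γ)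
    (hf : Function.Injective f) :
    minfo μ (fun ω => f (X ω)) Y = minfo μ X Y := by
  unfold minfo
  rw [ent_comp_inj μ X f hf]
  congr 1
  exact ent_comp_inj μ (fun ω => (X ω, Y ω)) (Prod.map f id)
    (hf.prodMap Function.injective_id)

lemma ent_subsingleton [Subsingleton α] (μ : Ω → ℝ) (hμ1 : ∑ ω, μ ω = 1) (X : Ω → α) :
    ent μ X = 0 := by
  unfold ent
  rw [neg_eq_zero]
  refine Finset.sum_eq_zero fun x _ => ?_
  have : probOf μ X x = 1 := by
    unfold probOf
    rw [← hμ1]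
    exact Finset.sum_congr rfl fun ω _ => if_pos (Subsingleton.elim _ _)
  simp [this]

lemma minfo_right_subsingleton [Subsingleton β] [Nonempty β] (μ : Ω → ℝ)
    (hμ1 : ∑ ω, μ ω = 1) (X : Ω → α) (Y : Ω → β) : minfo μ X Y = 0 := by
  obtain ⟨b₀⟩ := ‹Nonempty β›
  unfold minfo
  rw [ent_subsingleton μ hμ1 Y]
  have h : ent μ (fun ω => (X ω, Y ω)) = ent μ X := by
    have he : (fun ω => (X ω, Y ω)) = fun ω => ((X ω, b₀) : α × β) := by
      funext ω; rw [Subsingleton.elim (Y ω) b₀]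
    rw [he]
    exact ent_comp_inj μ X (fun a => (a, b₀)) (fun a a' h => congrArg Prod.fst h)
  rw [h]; ring

lemma minfo_left_subsingleton [Subsingleton α] [Nonempty α] (μ : Ω → ℝ)
    (hμ1 : ∑ ω, μ ω = 1) (X : Ω → α) (Y : Ω → β) : minfo μ X Y = 0 := by
  obtain ⟨a₀⟩ := ‹Nonempty α›
  unfold minfo
  rw [ent_subsingleton μ hμ1 X]
  have h : ent μ (fun ω => (X ω, Y ω)) = ent μ Y := by
    have he : (fun ω => (X ω, Y ω)) = fun ω => ((a₀, Y ω) : α × β) := by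
      funext ω; rw [Subsingleton.elim (X ω) a₀]
    rw [he]
    exact ent_comp_inj μ Y (fun b => (a₀, b)) (fun b b' h => congrArg Prod.snd h)
  rw [h]; ring

lemma minfo_eq_of_dist (μ : Ω → ℝ) (X X' : Ω → α) (Y : Ω → β)
    (h : ∀ a b, probOf μ (fun ω => (X ω, Y ω)) (a, b) = probOf μ (fun ω => (X' ω, Y ω)) (a, b)) :
    minfo μ X Y = minfo μ X' Y := by
  unfold minfo
  have h1 : ent μ (fun ω => (X ω, Y ω)) = ent μ (fun ω => (X' ω, Y ω)) := by
    unfold ent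
    congr 1
    refine Finset.sum_congr rfl fun p _ => ?_
    obtain ⟨a, b⟩ := p
    rw [h a b]
  have h2 : ent μ X = ent μ X' := by
    unfold ent
    congr 1
    refine Finset.sum_congr rfl fun a _ => ?_
    rw [probOf_fst μ X Y a, probOf_fst μ X' Y a]
    simp only [h]
  rw [h1, h2]

end Aux

section SSA

lemma ssa_dist {α β γ : Type*} [Fintype α] [Fintype β] [Fintype γ]
    (p : α × β × γ → ℝ) (hp : ∀ x, 0 ≤ p x) :
    (-∑ x, p x * Real.logb 2 (p x))
      + (-∑ b, (∑ a, ∑ c, p (a, b, c)) * Real.logb 2 (∑ a, ∑ c, p (a, b, c)))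
    ≤ (-∑ y : α × β, (∑ c, p (y.1, y.2, c)) * Real.logb 2 (∑ c, p (y.1, y.2, c)))
      + (-∑ y : β × γ, (∑ a, p (a, y.1, y.2)) * Real.logb 2 (∑ a, p (a, y.1, y.2))) := by
  classical
  have hp3 : ∀ a b c, 0 ≤ p (a, b, c) := fun a b c => hp _
  -- notation
  set lg : ℝ → ℝ := Real.logb 2 with hlg
  have hAB0 : ∀ a b, 0 ≤ ∑ c, p (a, b, c) := fun a b => Finset.sum_nonneg fun c _ => hp _
  have hBC0 : ∀ b c, 0 ≤ ∑ a, p (a, b, c) := fun b c => Finset.sum_nonneg fun a _ => hp _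
  have hB0 : ∀ b, 0 ≤ ∑ a, ∑ c, p (a, b, c) := fun b =>
    Finset.sum_nonneg fun a _ => hAB0 a b
  -- the pointwise quantity Q
  set Q : α → β → γ → ℝ := fun a b c => if p (a, b, c) = 0 then 0
    else (∑ c', p (a, b, c')) * (∑ a', p (a', b, c)) / (∑ a', ∑ c', p (a', b, c')) with hQ
  -- pointwise bound
  have hterm : ∀ a b c,
      p (a,b,c) * lg (∑ c', p (a,b,c')) + p (a,b,c) * lg (∑ a', p (a',b,c))
        - p (a,b,c) * lg (p (a,b,c)) - p (a,b,c) * lg (∑ a', ∑ c', p (a',b,c'))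
      ≤ (Q a b c - p (a,b,c)) / Real.log 2 := by
    intro a b c
    rcases eq_or_lt_of_le (hp3 a b c) with h0 | hpos
    · simp [hQ, ← h0]
    · have h1 : 0 < ∑ c', p (a, b, c') :=
        lt_of_lt_of_le hpos (Finset.single_le_sum (fun c' _ => hp3 a b c') (Finset.mem_univ c))
      have h2 : 0 < ∑ a', p (a', b, c) :=
        lt_of_lt_of_le hpos (Finset.single_le_sum (fun a' _ => hp3 a' b c) (Finset.mem_univ a))
      have h3 : 0 < ∑ a', ∑ c', p (a', b, c') :=
        lt_of_lt_of_le h1 (Finset.single_le_sum (f := fun a' => ∑ c', p (a', b, c'))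
          (fun a' _ => hAB0 a' b) (Finset.mem_univ a))
      have hQval : Q a b c = (∑ c', p (a, b, c')) * (∑ a', p (a', b, c)) / (∑ a', ∑ c', p (a', b, c')) := by
        rw [hQ]; exact if_neg (ne_of_gt hpos)
      set r : ℝ := (∑ c', p (a, b, c')) * (∑ a', p (a', b, c)) / (p (a, b, c) * (∑ a', ∑ c', p (a', b, c'))) with hr
      have hrpos : 0 < r := by positivity
      have hlog : Real.log r ≤ r - 1 := Real.log_le_sub_one_of_pos hrpos
      have hlog2 : (0:ℝ) < Real.log 2 := Real.log_pos (by norm_num)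
      have hlgsum : lg (∑ c', p (a,b,c')) + lg (∑ a', p (a',b,c)) - lg (p (a,b,c))
          - lg (∑ a', ∑ c', p (a',b,c')) = Real.log r / Real.log 2 := by
        rw [hlg]
        simp only [Real.logb]
        rw [hr, Real.log_div (by positivity) (by positivity),
          Real.log_mul (ne_of_gt h1) (ne_of_gt h2),
          Real.log_mul (ne_of_gt hpos) (ne_of_gt h3)]
        ring
      have hmul : p (a,b,c) * Real.log r ≤ Q a b c - p (a,b,c) := by
        have := mul_le_mul_of_nonneg_left hlog (le_of_lt hpos)
        have heq : p (a,b,c) * (r - 1) = Q a b c - p (a,b,c) := by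
          rw [hQval, hr]
          field_simp
        linarith [heq ▸ this]
      calc p (a,b,c) * lg (∑ c', p (a,b,c')) + p (a,b,c) * lg (∑ a', p (a',b,c))
            - p (a,b,c) * lg (p (a,b,c)) - p (a,b,c) * lg (∑ a', ∑ c', p (a',b,c'))
          = p (a,b,c) * (Real.log r / Real.log 2) := by rw [← hlgsum]; ring
        _ = (p (a,b,c) * Real.log r) / Real.log 2 := by ring
        _ ≤ (Q a b c - p (a,b,c)) / Real.log 2 := by gcongr
  -- sum of Q is at most sum of p
  have hQsum : ∑ b, ∑ a, ∑ c, Q a b c ≤ ∑ b, ∑ a, ∑ c, p (a, b, c) := by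
    refine Finset.sum_le_sum fun b _ => ?_
    rcases eq_or_lt_of_le (hB0 b) with h0 | hpos
    · have hz : ∀ a c, p (a, b, c) = 0 := by
        intro a c
        have h1 := (Finset.sum_eq_zero_iff_of_nonneg (fun a' _ => hAB0 a' b)).mp h0.symm a (Finset.mem_univ a)
        exact (Finset.sum_eq_zero_iff_of_nonneg (fun c' _ => hp3 a b c')).mp h1 c (Finset.mem_univ c)
      have : ∀ a c, Q a b c = 0 := fun a c => by rw [hQ]; exact if_pos (hz a c)
      simp [this, hz]
    · have hQle : ∀ a c, Q a b c ≤ (∑ c', p (a, b, c')) * (∑ a', p (a', b, c)) / (∑ a', ∑ c', p (a', b, c')) := by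
        intro a c
        rw [hQ]
        dsimp only
        split
        · exact div_nonneg (mul_nonneg (hAB0 a b) (hBC0 b c)) (hB0 b)
        · exact le_refl _
      calc ∑ a, ∑ c, Q a b c
          ≤ ∑ a, ∑ c, (∑ c', p (a, b, c')) * (∑ a', p (a', b, c)) / (∑ a', ∑ c', p (a', b, c')) :=
            Finset.sum_le_sum fun a _ => Finset.sum_le_sum fun c _ => hQle a c
        _ = (∑ a, ∑ c, (∑ c', p (a, b, c')) * (∑ a', p (a', b, c))) / (∑ a', ∑ c', p (a', b, c')) := by
            rw [Finset.sum_div]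
            exact Finset.sum_congr rfl fun a _ => by rw [Finset.sum_div]
        _ = ((∑ a, ∑ c', p (a, b, c')) * (∑ c, ∑ a', p (a', b, c))) / (∑ a', ∑ c', p (a', b, c')) := by
            congr 1
            rw [Finset.sum_mul_sum]
        _ = ∑ a, ∑ c, p (a, b, c) := by
            have hc : (∑ c, ∑ a', p (a', b, c)) = ∑ a', ∑ c', p (a', b, c') := Finset.sum_comm
            rw [hc]
            field_simp
        _ = ∑ a, ∑ c, p (a, b, c) := rfl
  -- rewrite goal as triple sums
  have hlog2 : (0:ℝ) < Real.log 2 := Real.log_pos (by norm_num)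
  simp only [Fintype.sum_prod_type]
  have key : ∑ b, ∑ a, ∑ c,
      (p (a,b,c) * lg (∑ c', p (a,b,c')) + p (a,b,c) * lg (∑ a', p (a',b,c))
        - p (a,b,c) * lg (p (a,b,c)) - p (a,b,c) * lg (∑ a', ∑ c', p (a',b,c'))) ≤ 0 := by
    calc ∑ b, ∑ a, ∑ c,
        (p (a,b,c) * lg (∑ c', p (a,b,c')) + p (a,b,c) * lg (∑ a', p (a',b,c))
          - p (a,b,c) * lg (p (a,b,c)) - p (a,b,c) * lg (∑ a', ∑ c', p (a',b,c')))
        ≤ ∑ b, ∑ a, ∑ c, (Q a b c - p (a,b,c)) / Real.log 2 := by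
          refine Finset.sum_le_sum fun b _ => Finset.sum_le_sum fun a _ => Finset.sum_le_sum fun c _ => ?_
          exact hterm a b c
      _ = ((∑ b, ∑ a, ∑ c, Q a b c) - (∑ b, ∑ a, ∑ c, p (a,b,c))) / Real.log 2 := by
          simp only [← Finset.sum_div]
          congr 1
          simp only [Finset.sum_sub_distrib]
      _ ≤ 0 := by
          apply div_nonpos_of_nonpos_of_nonneg
          · linarith [hQsum]
          · exact le_of_lt hlog2
  -- now rearrange: express the four entropy sums as triple sums
  have eAB : ∑ a, ∑ b, (∑ c, p (a,b,c)) * lg (∑ c, p (a,b,c))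
      = ∑ b, ∑ a, ∑ c, p (a,b,c) * lg (∑ c', p (a,b,c')) := by
    rw [Finset.sum_comm]
    exact Finset.sum_congr rfl fun b _ => Finset.sum_congr rfl fun a _ => Finset.sum_mul ..
  have eBC : ∑ b, ∑ c, (∑ a, p (a,b,c)) * lg (∑ a, p (a,b,c))
      = ∑ b, ∑ a, ∑ c, p (a,b,c) * lg (∑ a', p (a',b,c)) := by
    refine Finset.sum_congr rfl fun b _ => ?_
    rw [show (∑ c, (∑ a, p (a,b,c)) * lg (∑ a, p (a,b,c)))
        = ∑ c, ∑ a, p (a,b,c) * lg (∑ a', p (a',b,c)) from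
      Finset.sum_congr rfl fun c _ => Finset.sum_mul ..]
    exact Finset.sum_comm
  have eT : ∑ a, ∑ b, ∑ c, p (a,b,c) * lg (p (a,b,c))
      = ∑ b, ∑ a, ∑ c, p (a,b,c) * lg (p (a,b,c)) := Finset.sum_comm
  have eB : ∑ b, (∑ a, ∑ c, p (a,b,c)) * lg (∑ a, ∑ c, p (a,b,c))
      = ∑ b, ∑ a, ∑ c, p (a,b,c) * lg (∑ a', ∑ c', p (a',b,c')) := by
    refine Finset.sum_congr rfl fun b _ => ?_
    rw [Finset.sum_mul]
    exact Finset.sum_congr rfl fun a _ => Finset.sum_mul ..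
  have expand : ∑ b, ∑ a, ∑ c,
      (p (a,b,c) * lg (∑ c', p (a,b,c')) + p (a,b,c) * lg (∑ a', p (a',b,c))
        - p (a,b,c) * lg (p (a,b,c)) - p (a,b,c) * lg (∑ a', ∑ c', p (a',b,c')))
      = (∑ b, ∑ a, ∑ c, p (a,b,c) * lg (∑ c', p (a,b,c')))
        + (∑ b, ∑ a, ∑ c, p (a,b,c) * lg (∑ a', p (a',b,c)))
        - (∑ b, ∑ a, ∑ c, p (a,b,c) * lg (p (a,b,c)))
        - (∑ b, ∑ a, ∑ c, p (a,b,c) * lg (∑ a', ∑ c', p (a',b,c'))) := by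
    simp only [Finset.sum_add_distrib, Finset.sum_sub_distrib]
  rw [expand] at key
  linarith [key, eAB, eBC, eT, eB]


variable {Ω α β γ : Type*} [Fintype Ω] [Fintype α] [Fintype β] [Fintype γ]
  [DecidableEq α] [DecidableEq β] [DecidableEq γ]

lemma ent_ssa (μ : Ω → ℝ) (hμ0 : ∀ ω, 0 ≤ μ ω) (X : Ω → α) (Y : Ω → β) (Z : Ω → γ) :
    ent μ (fun ω => (X ω, Y ω, Z ω)) + ent μ Y
      ≤ ent μ (fun ω => (X ω, Y ω)) + ent μ (fun ω => (Y ω, Z ω)) := by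
  have h := ssa_dist (fun x : α × β × γ => probOf μ (fun ω => (X ω, Y ω, Z ω)) x)
    (fun x => probOf_nonneg μ hμ0 _ x)
  have eT : ent μ (fun ω => (X ω, Y ω, Z ω))
      = -∑ x : α × β × γ, probOf μ (fun ω => (X ω, Y ω, Z ω)) x
          * Real.logb 2 (probOf μ (fun ω => (X ω, Y ω, Z ω)) x) := rfl
  have eY : ent μ Y = -∑ b, (∑ a, ∑ c, probOf μ (fun ω => (X ω, Y ω, Z ω)) (a, b, c))
      * Real.logb 2 (∑ a, ∑ c, probOf μ (fun ω => (X ω, Y ω, Z ω)) (a, b, c)) := by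
    unfold ent
    congr 1
    refine Finset.sum_congr rfl fun b _ => ?_
    rw [← marg3_2 μ X Y Z b]
  have eXY : ent μ (fun ω => (X ω, Y ω))
      = -∑ y : α × β, (∑ c, probOf μ (fun ω => (X ω, Y ω, Z ω)) (y.1, y.2, c))
          * Real.logb 2 (∑ c, probOf μ (fun ω => (X ω, Y ω, Z ω)) (y.1, y.2, c)) := by
    unfold ent
    congr 1
    refine Finset.sum_congr rfl fun y _ => ?_
    obtain ⟨a, b⟩ := y
    rw [← marg3_12 μ X Y Z a b]
  have eYZ : ent μ (fun ω => (Y ω, Z ω))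
      = -∑ y : β × γ, (∑ a, probOf μ (fun ω => (X ω, Y ω, Z ω)) (a, y.1, y.2))
          * Real.logb 2 (∑ a, probOf μ (fun ω => (X ω, Y ω, Z ω)) (a, y.1, y.2)) := by
    unfold ent
    congr 1
    refine Finset.sum_congr rfl fun y _ => ?_
    obtain ⟨b, c⟩ := y
    rw [← marg3_23 μ X Y Z b c]
  rw [eT, eY, eXY, eYZ]
  exact h

lemma minfo_pair_ge (μ : Ω → ℝ) (hμ0 : ∀ ω, 0 ≤ μ ω)
    (X : Ω → α) (Y : Ω → β) (Z : Ω → γ) :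
    minfo μ X Y + minfo μ Z Y - minfo μ X Z ≤ minfo μ (fun ω => (X ω, Z ω)) Y := by
  have hssa := ent_ssa μ hμ0 X Y Z
  have h1 : ent μ (fun ω => ((X ω, Z ω), Y ω)) = ent μ (fun ω => (X ω, Y ω, Z ω)) := by
    exact ent_comp_inj μ (fun ω => (X ω, Y ω, Z ω))
      (fun x : α × β × γ => ((x.1, x.2.2), x.2.1))
      (by rintro ⟨a1, a2, a3⟩ ⟨b1, b2, b3⟩ h; simp [Prod.ext_iff] at h ⊢; tauto)
  have h2 : ent μ (fun ω => (Z ω, Y ω)) = ent μ (fun ω => (Y ω, Z ω)) := by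
    exact ent_comp_inj μ (fun ω => (Y ω, Z ω)) Prod.swap Prod.swap_injective
  simp only [minfo]
  linarith [hssa, h1, h2]


end SSA

/-- If the pairs `(J_ℓ, Y)` are identically distributed and the correlations of `J_ℓ` with the
tail `J_{ℓ+1}…J_k` are bounded by `ε_ℓ`, then
`I(J₁;Y) ≤ (1/k) I(J₁…J_k;Y) + (1/k) ∑_{ℓ<k} ε_ℓ`. -/
theorem minfo_single_le_average
    {Ω α β : Type*} [Fintype Ω] [Fintype α] [Fintype β] [DecidableEq α] [DecidableEq β]
    (μ : Ω → ℝ) (hμ0 : ∀ ω, 0 ≤ μ ω) (hμ1 : ∑ ω, μ ω = 1)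
    (k : ℕ) (hk : 0 < k) (J : Fin k → Ω → α) (Y : Ω → β) (ε : Fin k → ℝ)
    (hsame : ∀ ℓ : Fin k, ∀ (a : α) (y : β),
      probOf μ (fun ω => (J ℓ ω, Y ω)) (a, y) = probOf μ (fun ω => (J ⟨0, hk⟩ ω, Y ω)) (a, y))
    (hcorr : ∀ ℓ : Fin k, (ℓ : ℕ) + 1 < k →
      minfo μ (J ℓ) (fun ω => fun i : {i : Fin k // ℓ < i} => J i ω) ≤ ε ℓ) :
    minfo μ (J ⟨0, hk⟩) Y
      ≤ (1 / k) * minfo μ (fun ω => fun i : Fin k => J i ω) Y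
        + (1 / k) * ∑ ℓ ∈ Finset.univ.filter (fun ℓ : Fin k => (ℓ : ℕ) + 1 < k), ε ℓ := by
  classical
  set I0 : ℝ := minfo μ (J ⟨0, hk⟩) Y with hI0
  have claim : ∀ n m, m + n = k →
      (n : ℝ) * I0
        ≤ minfo μ (fun ω => fun i : {i : Fin k // m ≤ (i : ℕ)} => J i.1 ω) Y
          + ∑ ℓ ∈ Finset.univ.filter (fun ℓ : Fin k => m ≤ (ℓ : ℕ) ∧ (ℓ : ℕ) + 1 < k), ε ℓ := by
    intro n
    induction n with
    | zero =>
      intro m hm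
      haveI : IsEmpty {i : Fin k // m ≤ (i : ℕ)} :=
        ⟨fun i => by have h1 := i.2; have h2 := i.1.2; omega⟩
      haveI : Subsingleton ({i : Fin k // m ≤ (i : ℕ)} → α) :=
        ⟨fun f g => funext fun i => isEmptyElim i⟩
      haveI : Nonempty ({i : Fin k // m ≤ (i : ℕ)} → α) := ⟨fun i => isEmptyElim i⟩
      have hz : minfo μ (fun ω => fun i : {i : Fin k // m ≤ (i : ℕ)} => J i.1 ω) Y = 0 :=
        minfo_left_subsingleton μ hμ1 _ Y
      have hs : ∑ ℓ ∈ Finset.univ.filter (fun ℓ : Fin k => m ≤ (ℓ : ℕ) ∧ (ℓ : ℕ) + 1 < k), ε ℓ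
          = 0 := by
        rw [Finset.sum_filter]
        refine Finset.sum_eq_zero fun ℓ _ => ?_
        rw [if_neg]
        rintro ⟨h1, h2⟩
        have := ℓ.2
        omega
      rw [hz, hs]
      simp
    | succ n ih =>
      intro m hm
      have hm' : m < k := by omega
      set ℓ₀ : Fin k := ⟨m, hm'⟩ with hℓ₀
      have ihm := ih (m + 1) (by omega)
      set Z : Ω → ({i : Fin k // m + 1 ≤ (i : ℕ)} → α) :=
        fun ω => fun j => J j.1 ω with hZ
      -- recoding (J ℓ₀, Z) into the tail at m
      have hrecode : minfo μ (fun ω => (J ℓ₀ ω, Z ω)) Y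
          = minfo μ (fun ω => fun i : {i : Fin k // m ≤ (i : ℕ)} => J i.1 ω) Y := by
        set f : α × ({i : Fin k // m + 1 ≤ (i : ℕ)} → α) → ({i : Fin k // m ≤ (i : ℕ)} → α) :=
          fun x => fun i => if h : (i.1 : ℕ) = m then x.1
            else x.2 ⟨i.1, Nat.lt_of_le_of_ne i.2 (Ne.symm h)⟩ with hf
        have hfinj : Function.Injective f := by
          intro x y hxy
          have h1 : x.1 = y.1 := by
            have := congrFun hxy ⟨⟨m, hm'⟩, le_rfl⟩
            simpa [hf] using this
          have h2 : x.2 = y.2 := by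
            funext j
            have hne : ((⟨j.1, Nat.le_of_succ_le j.2⟩ : {i : Fin k // m ≤ (i : ℕ)}).1 : ℕ) ≠ m := by
              show (j.1 : ℕ) ≠ m
              have := j.2; omega
            have := congrFun hxy ⟨j.1, Nat.le_of_succ_le j.2⟩
            rw [hf] at this
            simp only [dif_neg hne] at this
            convert this using 2
          exact Prod.ext h1 h2
        have hcomp : (fun ω => f (J ℓ₀ ω, Z ω))
            = fun ω => fun i : {i : Fin k // m ≤ (i : ℕ)} => J i.1 ω := by
          funext ω
          funext i
          rw [hf]
          by_cases h : (i.1 : ℕ) = m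
          · have hi : i.1 = ℓ₀ := Fin.ext h
            simp [hi]
            exact fun h' => absurd rfl h'
          · simp only [dif_neg h]
            rfl
        rw [← hcomp]
        exact (minfo_comp_inj μ (fun ω => (J ℓ₀ ω, Z ω)) Y f hfinj).symm
      have hkey := minfo_pair_ge μ hμ0 (J ℓ₀) Y Z
      rw [hrecode] at hkey
      -- I(J ℓ₀; Y) = I0
      have hIeq : minfo μ (J ℓ₀) Y = I0 :=
        minfo_eq_of_dist μ (J ℓ₀) (J ⟨0, hk⟩) Y (fun a b => hsame ℓ₀ a b)
      -- bound the correlation term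
      have hC : minfo μ (J ℓ₀) Z ≤ (if m + 1 < k then ε ℓ₀ else 0) := by
        by_cases hmk : m + 1 < k
        · rw [if_pos hmk]
          exact hcorr ℓ₀ hmk
        · rw [if_neg hmk]
          have hmk' : m + 1 = k := by omega
          haveI : IsEmpty {i : Fin k // m + 1 ≤ (i : ℕ)} :=
            ⟨fun i => by have h1 := i.2; have h2 := i.1.2; omega⟩
          haveI : Subsingleton ({i : Fin k // m + 1 ≤ (i : ℕ)} → α) :=
            ⟨fun f g => funext fun i => isEmptyElim i⟩
          haveI : Nonempty ({i : Fin k // m + 1 ≤ (i : ℕ)} → α) := ⟨fun i => isEmptyElim i⟩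
          exact le_of_eq (minfo_right_subsingleton μ hμ1 _ _)
      -- split the epsilon sum
      have hE : ∑ ℓ ∈ Finset.univ.filter (fun ℓ : Fin k => m ≤ (ℓ : ℕ) ∧ (ℓ : ℕ) + 1 < k), ε ℓ
          = (if m + 1 < k then ε ℓ₀ else 0)
            + ∑ ℓ ∈ Finset.univ.filter (fun ℓ : Fin k => m + 1 ≤ (ℓ : ℕ) ∧ (ℓ : ℕ) + 1 < k), ε ℓ := by
        rw [Finset.sum_filter, Finset.sum_filter]
        have h1 : ∀ ℓ : Fin k,
            (if m ≤ (ℓ : ℕ) ∧ (ℓ : ℕ) + 1 < k then ε ℓ else 0)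
              = (if (ℓ : ℕ) = m ∧ m + 1 < k then ε ℓ else 0)
                + (if m + 1 ≤ (ℓ : ℕ) ∧ (ℓ : ℕ) + 1 < k then ε ℓ else 0) := by
          intro ℓ
          by_cases hl1 : (ℓ : ℕ) = m
          · rw [hl1]
            by_cases hl2 : m + 1 < k <;> simp [hl2]
          · simp only [hl1, false_and, if_false, zero_add]
            exact if_congr (by omega) rfl rfl
        rw [Finset.sum_congr rfl fun ℓ _ => h1 ℓ, Finset.sum_add_distrib]
        congr 1
        by_cases hmk : m + 1 < k
        · rw [if_pos hmk]
          rw [Fintype.sum_eq_single ℓ₀ ?_]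
          · simp [hℓ₀, hmk]
          · intro ℓ hℓ
            rw [if_neg]
            rintro ⟨hl1, _⟩
            exact hℓ (Fin.ext hl1)
        · rw [if_neg hmk]
          refine Finset.sum_eq_zero fun ℓ _ => ?_
          rw [if_neg]
          rintro ⟨_, h2⟩
          exact hmk (by omega)
      push_cast
      rw [hE]
      linarith [ihm, hkey, hIeq, hC]
  -- conclude
  have h0 := claim k 0 (by omega)
  have hT0 : minfo μ (fun ω => fun i : {i : Fin k // 0 ≤ (i : ℕ)} => J i.1 ω) Y
      = minfo μ (fun ω => fun i : Fin k => J i ω) Y := by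
    have := minfo_comp_inj μ (fun ω => fun i : Fin k => J i ω) Y
      (fun h => fun i : {i : Fin k // 0 ≤ (i : ℕ)} => h i.1)
      (fun h h' he => funext fun i => congrFun he ⟨i, Nat.zero_le _⟩)
    exact this
  have hE0 : ∑ ℓ ∈ Finset.univ.filter (fun ℓ : Fin k => 0 ≤ (ℓ : ℕ) ∧ (ℓ : ℕ) + 1 < k), ε ℓ
      = ∑ ℓ ∈ Finset.univ.filter (fun ℓ : Fin k => (ℓ : ℕ) + 1 < k), ε ℓ := by
    congr 1
    ext ℓ
    simp [Nat.zero_le]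
  rw [hT0, hE0] at h0
  have hkpos : (0 : ℝ) < k := by exact_mod_cast hk
  rw [hI0] at h0 ⊢
  set M := minfo μ (fun ω => fun i : Fin k => J i ω) Y
  set E := ∑ ℓ ∈ Finset.univ.filter (fun ℓ : Fin k => (ℓ : ℕ) + 1 < k), ε ℓ
  have : minfo μ (J ⟨0, hk⟩) Y ≤ (M + E) / k := by
    rw [le_div_iff₀ hkpos]
    linarith [h0]
  calc minfo μ (J ⟨0, hk⟩) Y ≤ (M + E) / k := this
    _ = 1 / (k : ℝ) * M + 1 / (k : ℝ) * E := by ring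
end
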